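/- Under the token setting with Ŝ_* ⊆ S_* satisfying |Ŝ_*| ≥ (1 − ξ_φ)|S_*|, if the phase-modulated logit gap satisfies Δ_a ≥ log(|S_¬*| / ((1 − ξ_φ)|S_*|)) + log(1/ε), then the total attention mass on the relevant tokens satisfies Σ_{j ∈ S_*} a_{0j} ≥ 1 − ε. -/

import Mathlib

/-- if `|Ŝ_*| ≥ (1 − ξ_φ)|S_*|` and the phase-modulated logit gap
satisfies `Δ_a ≥ log(|S_¬*| / ((1 − ξ_φ)|S_*|)) + log(1/ε)`, then the total
attention mass on the relevant tokens satisfies `Σ_{j ∈ S_*} a_{0j} ≥ 1 − ε`. -/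
theorem attention_concentration_of_gap
    {ι : Type*} [DecidableEq ι]
    (Sstar Snot : Finset ι) (hSstar : Sstar.Nonempty) (hSnot : Snot.Nonempty)
    (hdisj : Disjoint Sstar Snot)
    (Shat : Finset ι) (hsub : Shat ⊆ Sstar) (hShat : Shat.Nonempty)
    (ξφ ε : ℝ) (hξ0 : 0 ≤ ξφ) (hξ1 : ξφ < 1) (hε : 0 < ε)
    -- logits and softmax attention weights
    (s : ι → ℝ) (a : ι → ℝ)
    (ha : ∀ j, a j = Real.exp (s j) / ∑ l ∈ Sstar ∪ Snot, Real.exp (s l))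
    -- |Ŝ_*| ≥ (1 − ξ_φ)|S_*|
    (hcard : (1 - ξφ) * (Sstar.card : ℝ) ≤ (Shat.card : ℝ))
    -- the gap condition on Δ_a
    (hgap : Shat.inf' hShat s - Snot.sup' hSnot s
        ≥ Real.log ((Snot.card : ℝ) / ((1 - ξφ) * (Sstar.card : ℝ)))
          + Real.log (1 / ε)) :
    ∑ j ∈ Sstar, a j ≥ 1 - ε := by
  set m := Shat.inf' hShat s with hm
  set M := Snot.sup' hSnot s with hM
  set Z := ∑ l ∈ Sstar ∪ Snot, Real.exp (s l) with hZ
  have hNpos : (0:ℝ) < (Snot.card : ℝ) := by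
    exact_mod_cast Finset.card_pos.mpr hSnot
  have hSpos : (0:ℝ) < (1 - ξφ) * (Sstar.card : ℝ) := by
    have : (0:ℝ) < (Sstar.card : ℝ) := by exact_mod_cast Finset.card_pos.mpr hSstar
    nlinarith
  have hHpos : (0:ℝ) < (Shat.card : ℝ) := lt_of_lt_of_le hSpos hcard
  -- gap consequence: |N| * exp M ≤ ε * ((1-ξ)|S|) * exp m
  have hratio : (Snot.card : ℝ) / ((1 - ξφ) * (Sstar.card : ℝ)) * (1/ε)
      ≤ Real.exp (m - M) := by
    have h1 : Real.log ((Snot.card : ℝ) / ((1 - ξφ) * (Sstar.card : ℝ)) * (1/ε))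
        = Real.log ((Snot.card : ℝ) / ((1 - ξφ) * (Sstar.card : ℝ))) + Real.log (1/ε) := by
      rw [Real.log_mul (by positivity) (by positivity)]
    calc (Snot.card : ℝ) / ((1 - ξφ) * (Sstar.card : ℝ)) * (1/ε)
        = Real.exp (Real.log ((Snot.card : ℝ) / ((1 - ξφ) * (Sstar.card : ℝ)) * (1/ε))) := by
          rw [Real.exp_log (by positivity)]
      _ ≤ Real.exp (m - M) := Real.exp_le_exp.mpr (h1 ▸ hgap)
  have hkey : (Snot.card : ℝ) * Real.exp M ≤ ε * ((1 - ξφ) * (Sstar.card : ℝ)) * Real.exp m := by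
    have h2 : (Snot.card : ℝ) / ((1 - ξφ) * (Sstar.card : ℝ)) * (1/ε) * Real.exp M
        ≤ Real.exp (m - M) * Real.exp M := by
      exact mul_le_mul_of_nonneg_right hratio (Real.exp_pos M).le
    rw [← Real.exp_add] at h2
    simp only [sub_add_cancel] at h2
    have hc := mul_le_mul_of_nonneg_left h2 (le_of_lt (by positivity :
      (0:ℝ) < ε * ((1 - ξφ) * (Sstar.card : ℝ))))
    calc (Snot.card : ℝ) * Real.exp M
        = ε * ((1 - ξφ) * (Sstar.card : ℝ)) *
          ((Snot.card : ℝ) / ((1 - ξφ) * (Sstar.card : ℝ)) * (1/ε) * Real.exp M) := by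
          field_simp [show (1 - ξφ) ≠ 0 by linarith]
      _ ≤ ε * ((1 - ξφ) * (Sstar.card : ℝ)) * Real.exp m := hc
  -- bounds on sums
  have hNsum : ∑ l ∈ Snot, Real.exp (s l) ≤ (Snot.card : ℝ) * Real.exp M := by
    calc ∑ l ∈ Snot, Real.exp (s l) ≤ ∑ _l ∈ Snot, Real.exp M := by
          apply Finset.sum_le_sum
          intro i hi
          exact Real.exp_le_exp.mpr (Finset.le_sup' s hi)
      _ = (Snot.card : ℝ) * Real.exp M := by simp [Finset.sum_const, nsmul_eq_mul]
  have hHsum : (Shat.card : ℝ) * Real.exp m ≤ ∑ l ∈ Shat, Real.exp (s l) := by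
    calc (Shat.card : ℝ) * Real.exp m = ∑ _l ∈ Shat, Real.exp m := by
          simp [Finset.sum_const, nsmul_eq_mul]
      _ ≤ ∑ l ∈ Shat, Real.exp (s l) := by
          apply Finset.sum_le_sum
          intro i hi
          exact Real.exp_le_exp.mpr (Finset.inf'_le s hi)
  have hZsplit : Z = ∑ l ∈ Sstar, Real.exp (s l) + ∑ l ∈ Snot, Real.exp (s l) := by
    rw [hZ, Finset.sum_union hdisj]
  have hZpos : 0 < Z := by
    rw [hZsplit]
    have h1 : 0 < ∑ l ∈ Sstar, Real.exp (s l) :=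
      Finset.sum_pos (fun i _ => Real.exp_pos _) hSstar
    have h2 : 0 < ∑ l ∈ Snot, Real.exp (s l) :=
      Finset.sum_pos (fun i _ => Real.exp_pos _) hSnot
    linarith
  have hZge : ∑ l ∈ Shat, Real.exp (s l) ≤ Z := by
    rw [hZsplit]
    have h2 : 0 < ∑ l ∈ Snot, Real.exp (s l) :=
      Finset.sum_pos (fun i _ => Real.exp_pos _) hSnot
    have h3 : ∑ l ∈ Shat, Real.exp (s l) ≤ ∑ l ∈ Sstar, Real.exp (s l) :=
      Finset.sum_le_sum_of_subset_of_nonneg hsub (fun i _ _ => (Real.exp_pos _).le)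
    linarith
  -- main bound : Σ_N exp ≤ ε * Z
  have hmain : ∑ l ∈ Snot, Real.exp (s l) ≤ ε * Z := by
    have h1 : ε * ((1 - ξφ) * (Sstar.card : ℝ)) * Real.exp m
        ≤ ε * ((Shat.card : ℝ) * Real.exp m) := by
      have := mul_le_mul_of_nonneg_right hcard (Real.exp_pos m).le
      nlinarith
    have h2 : ε * ((Shat.card : ℝ) * Real.exp m) ≤ ε * Z := by
      apply mul_le_mul_of_nonneg_left _ hε.le
      exact le_trans hHsum hZge
    linarith
  -- conclude
  have hsum : ∑ j ∈ Sstar, a j = (∑ j ∈ Sstar, Real.exp (s j)) / Z := by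
    rw [Finset.sum_div]
    exact Finset.sum_congr rfl fun j _ => ha j
  rw [hsum, ge_iff_le, le_div_iff₀ hZpos]
  nlinarith [hZsplit]
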